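/- If a tree T₂ has height bounded by ordinal α and f : T₁ → T₂ is a finite injury map, then T₁ has height bounded by ω^α; that is, there is a function o : T₁ → ω^α with x ⊊ y implying o(y) < o(x). -/

import Mathlib

/-- Nodes of our trees: finite sequences over the label set `ℕ ∪ {?}`,
with `none` playing the role of `?`. -/
abbrev Node := List (Option ℕ)

/-- A tree is a set of finite sequences closed under initial segments. -/
def IsTree (T : Set Node) : Prop := ∀ x y : Node, x <+: y → y ∈ T → x ∈ T

/-- Strict extension ordering: `y` properly extends `x`. -/
def SPrefix (x y : Node) : Prop := x <+: y ∧ x ≠ y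

/-- A tree is well-founded if it has no infinite branch `x₁ ⊊ x₂ ⊊ ⋯`. -/
def TreeWF (T : Set Node) : Prop :=
  ¬ ∃ f : ℕ → Node, (∀ n, f n ∈ T) ∧ ∀ n, SPrefix (f n) (f (n + 1))

/-- The "injury" alternative: some node `a` followed by `?` in `s` is
corrected to a natural-number label in `t`. -/
def Injury (s t : Node) : Prop :=
  ∃ (a : Node) (u : ℕ), (a ++ [none]) <+: s ∧ (a ++ [some u]) <+: t

/-- `l` is a finite injury map on `T₁`: whenever `x ⊊ y`, either `l x ⊊ l y`,
or some `?`-branch of `l x` is corrected to a numeral branch in `l y`. -/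
def FiniteInjury (T₁ : Set Node) (l : Node → Node) : Prop :=
  ∀ x ∈ T₁, ∀ y ∈ T₁, SPrefix x y → SPrefix (l x) (l y) ∨ Injury (l x) (l y)

/-- `l` is weakly finite injury: whenever `x ⊆ y`, either `l x ⊆ l y` or an
injury occurs, and for every `x` there is an `n` such that any strict chain of
length `n` in `T₁` starting at `x` forces `l` to change value. -/
def WeaklyFiniteInjury (T₁ : Set Node) (l : Node → Node) : Prop :=
  (∀ x ∈ T₁, ∀ y ∈ T₁, x <+: y → l x <+: l y ∨ Injury (l x) (l y)) ∧
  (∀ x ∈ T₁, ∃ n : ℕ, ∀ c : ℕ → Node, c 0 = x → (∀ i, c i ∈ T₁) →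
      (∀ i < n, SPrefix (c i) (c (i + 1))) → l (c 0) ≠ l (c n))


open Ordinal in
/-- The ordinal sum `Σ_{a⌢⟨?⟩ ⊆ t} ω^{h a}`, taken in order of increasing length of `a`. -/
noncomputable def osum (h : Node → Ordinal) (t : Node) : Ordinal :=
  ((List.range t.length).filter fun i => t[i]? == some none).foldr
    (fun i acc => Ordinal.omega0 ^ h (t.take i) + acc) 0

open Ordinal in
noncomputable def oFun (h : Node → Ordinal) (f : Node → Node) (x : Node) : Ordinal :=
  osum h (f x) + Ordinal.omega0 ^ (h (f x) + 1)




open Ordinal List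

private lemma foldr_add_eq (c : ℕ → Ordinal) (l : List ℕ) (X : Ordinal) :
    l.foldr (fun i acc => c i + acc) X = l.foldr (fun i acc => c i + acc) 0 + X := by
  induction l with
  | nil => simp
  | cons i l ih => simp [ih, add_assoc]

private lemma foldr_congr_fun (c d : ℕ → Ordinal) (l : List ℕ) (X : Ordinal)
    (hcd : ∀ i ∈ l, c i = d i) :
    l.foldr (fun i acc => c i + acc) X = l.foldr (fun i acc => d i + acc) X := by
  induction l with
  | nil => rfl
  | cons i l ih =>
    simp only [List.foldr_cons, hcd i (by simp),
      ih (fun j hj => hcd j (by simp [hj]))]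

private lemma foldr_lt_prin {c : ℕ → Ordinal} {l : List ℕ} {X δ : Ordinal}
    (hp : Ordinal.Principal (· + ·) δ) (hX : X < δ) :
    (∀ i ∈ l, c i < δ) → l.foldr (fun i acc => c i + acc) X < δ := by
  induction l with
  | nil => exact fun _ => hX
  | cons i l ih =>
    intro hc
    exact hp (hc i (by simp)) (ih fun j hj => hc j (by simp [hj]))

private lemma osum_append (h : Node → Ordinal) (s r : Node) :
    osum h (s ++ r) = osum h s +
      (((List.range r.length).map (fun x => s.length + x)).filter
          (fun i => (s ++ r)[i]? == some none)).foldr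
        (fun i acc => omega0 ^ h ((s ++ r).take i) + acc) 0 := by
  unfold osum
  rw [List.length_append, List.range_add, List.filter_append, List.foldr_append,
    foldr_add_eq (fun i => omega0 ^ h ((s ++ r).take i))]
  congr 1
  rw [List.filter_congr (l := List.range s.length)
      (q := fun i => s[i]? == some none)
      (fun i hi => by rw [List.getElem?_append_left (List.mem_range.1 hi)])]
  exact foldr_congr_fun _ _ _ _ (fun i hi => by
    rw [List.take_append_of_le_length
      (le_of_lt (List.mem_range.1 (List.mem_of_mem_filter hi)))])

private lemma osum_concat_none (h : Node → Ordinal) (a : Node) :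
    osum h (a ++ [(none : Option ℕ)]) = osum h a + omega0 ^ h a := by
  rw [osum_append]
  congr 1
  simp [List.range_succ, List.getElem?_concat_length,
    List.take_append_of_le_length, List.take_of_length_le]

private lemma osum_concat_some (h : Node → Ordinal) (a : Node) (u : ℕ) :
    osum h (a ++ [some u]) = osum h a := by
  rw [osum_append]
  simp [List.range_succ, List.getElem?_concat_length]

private lemma prefix_take_of_prefix {s t : Node} (hst : s <+: t) {i : ℕ}
    (hi : s.length ≤ i) : s <+: t.take i := by
  obtain ⟨r, rfl⟩ := hst
  rw [List.take_append, List.take_of_length_le hi]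
  exact List.prefix_append _ _

private lemma sprefix_take {s t : Node} (hst : s <+: t) {i : ℕ}
    (h1 : s.length < i) (h2 : i ≤ t.length) : SPrefix s (t.take i) := by
  refine ⟨prefix_take_of_prefix hst h1.le, fun he => ?_⟩
  have hlen : (t.take i).length = i := by rw [List.length_take]; omega
  rw [← he] at hlen; omega

private lemma opow_mul_two_lt {β γ : Ordinal} (hβγ : β < γ) :
    omega0 ^ β * 2 < omega0 ^ γ := by
  calc omega0 ^ β * 2 < omega0 ^ β * omega0 := by
        refine mul_lt_mul_of_pos_left ?_ (opow_pos _ omega0_pos)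
        exact_mod_cast nat_lt_omega0 2
    _ = omega0 ^ (β + 1) := by rw [opow_add, opow_one]
    _ ≤ omega0 ^ γ := opow_le_opow_right omega0_pos (Order.add_one_le_of_lt hβγ)

private lemma opow_mul_two_eq (β : Ordinal) :
    omega0 ^ β * 2 = omega0 ^ β + omega0 ^ β := by
  rw [show (2 : Ordinal) = 1 + 1 from (one_add_one_eq_two).symm, mul_add, mul_one]

/-- If `T₂` has height bounded by `α` and `f : T₁ → T₂` is finite injury, then
`T₁` has height bounded by `ω^α`: there is `o : T₁ → ω^α` with `x ⊊ y`
implying `o y < o x`. -/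
theorem stmt4 (T₁ T₂ : Set Node) (hT₁ : IsTree T₁) (hT₂ : IsTree T₂)
    (f : Node → Node) (hmap : ∀ x ∈ T₁, f x ∈ T₂) (hfi : FiniteInjury T₁ f)
    (α : Ordinal) (h : Node → Ordinal)
    (hbd : ∀ t ∈ T₂, h t < α)
    (hdec : ∀ s ∈ T₂, ∀ t ∈ T₂, SPrefix s t → h t < h s) :
    ∃ o : Node → Ordinal, (∀ x ∈ T₁, o x < Ordinal.omega0 ^ α) ∧
      ∀ x ∈ T₁, ∀ y ∈ T₁, SPrefix x y → o y < o x := by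
  refine ⟨fun x => osum h (f x) + omega0 ^ (h (f x)) * 2, ?_, ?_⟩
  · -- boundedness
    intro x hx
    have hfx : f x ∈ T₂ := hmap x hx
    have hp := principal_add_omega0_opow α
    have h1 : osum h (f x) < omega0 ^ α := by
      unfold osum
      refine foldr_lt_prin hp (opow_pos _ omega0_pos) (fun i _ => ?_)
      refine (opow_lt_opow_iff_right one_lt_omega0).2 (hbd _ ?_)
      exact hT₂ _ _ (List.take_prefix _ _) hfx
    exact hp h1 (opow_mul_two_lt (hbd _ hfx))
  · -- decrease
    intro x hx y hy hxy
    show osum h (f y) + omega0 ^ (h (f y)) * 2 < osum h (f x) + omega0 ^ (h (f x)) * 2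
    have hfx : f x ∈ T₂ := hmap x hx
    have hfy : f y ∈ T₂ := hmap y hy
    rcases hfi x hx y hy hxy with hc | ⟨a, u, ha1, ha2⟩
    · -- f x ⊊ f y
      have hht : h (f y) < h (f x) := hdec _ hfx _ hfy hc
      obtain ⟨⟨r, hr⟩, hne⟩ := hc
      have hpr := principal_add_omega0_opow (h (f x))
      have hX : omega0 ^ h (f y) * 2 < omega0 ^ h (f x) := opow_mul_two_lt hht
      rw [← hr] at hfy hX ⊢
      rw [osum_append h (f x) r, add_assoc, ← foldr_add_eq]
      refine add_lt_add_right ?_ (osum h (f x))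
      set l₂ := ((List.range r.length).map (fun x_1 => (f x).length + x_1)).filter
          (fun i => (f x ++ r)[i]? == some none) with hl₂
      have hmem : ∀ j ∈ l₂, (f x).length ≤ j ∧ j < (f x ++ r).length := by
        intro j hj
        obtain ⟨k, hk, rfl⟩ := List.mem_map.1 (List.mem_of_mem_filter hj)
        have := List.mem_range.1 hk
        simp only [List.length_append]
        omega
      have hpw : l₂.Pairwise (· < ·) :=
        List.Pairwise.sublist (List.filter_sublist)
          (List.pairwise_lt_range.map _ (fun a b hab => by omega))
      have hterm : ∀ j ∈ l₂, (f x).length < j →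
          omega0 ^ h ((f x ++ r).take j) < omega0 ^ h (f x) := by
        intro j hj hjlt
        have hj2 := hmem j hj
        have hsp : SPrefix (f x) ((f x ++ r).take j) :=
          sprefix_take (List.prefix_append _ _) hjlt (le_of_lt hj2.2)
        refine (opow_lt_opow_iff_right one_lt_omega0).2 ?_
        exact hdec _ hfx _ (hT₂ _ _ (List.take_prefix _ _) hfy) hsp
      rcases hl : l₂ with _ | ⟨i, rest⟩
      · exact lt_of_lt_of_le hX (by rw [opow_mul_two_eq]; exact le_self_add)
      · have hi : i ∈ l₂ := by rw [hl]; exact List.mem_cons_self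
        have hrest : ∀ j ∈ rest, (f x).length < j := by
          intro j hj
          have : i < j := by
            have h2 := hl ▸ hpw
            exact (List.pairwise_cons.1 h2).1 j hj
          have := (hmem i hi).1
          omega
        rw [List.foldr_cons]
        have hrlt : rest.foldr (fun i acc => omega0 ^ h ((f x ++ r).take i) + acc)
            (omega0 ^ h (f x ++ r) * 2) < omega0 ^ h (f x) := by
          refine foldr_lt_prin hpr hX (fun j hj => ?_)
          exact hterm j (by rw [hl]; exact List.mem_cons_of_mem _ hj) (hrest j hj)
        have hhead : omega0 ^ h ((f x ++ r).take i) ≤ omega0 ^ h (f x) := by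
          rcases eq_or_ne ((f x ++ r).take i) (f x) with he | hne'
          · rw [he]
          · refine opow_le_opow_right omega0_pos (le_of_lt ?_)
            refine hdec _ hfx _ (hT₂ _ _ (List.take_prefix _ _) hfy) ?_
            exact ⟨prefix_take_of_prefix (List.prefix_append _ _) (hmem i hi).1,
              fun he => hne' he.symm⟩
        calc omega0 ^ h ((f x ++ r).take i) + _ ≤ omega0 ^ h (f x) + _ :=
              add_le_add_left hhead _
          _ < omega0 ^ h (f x) + omega0 ^ h (f x) := add_lt_add_right hrlt _
          _ = omega0 ^ h (f x) * 2 := (opow_mul_two_eq _).symm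
    · -- injury case
      have hax : a ∈ T₂ := hT₂ a (f x) ((List.prefix_append a [none]).trans ha1) hfx
      have hay : a <+: f y := (List.prefix_append a [some u]).trans ha2
      have hlen_y : a.length + 1 ≤ (f y).length := by
        have := ha2.length_le
        simpa using this
      have hspay : SPrefix a (f y) := ⟨hay, fun he => by
        have := congrArg List.length he; omega⟩
      have hprin := principal_add_omega0_opow (h a)
      have hlt : osum h (f y) + omega0 ^ h (f y) * 2 < osum h a + omega0 ^ h a := by
        obtain ⟨r, hr⟩ := ha2
        rw [← hr] at hfy hspay
        rw [← hr, osum_append h (a ++ [some u]) r, osum_concat_some, add_assoc,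
          ← foldr_add_eq]
        refine add_lt_add_right ?_ (osum h a)
        refine foldr_lt_prin hprin
          (opow_mul_two_lt (hdec _ hax _ hfy hspay)) (fun j hj => ?_)
        obtain ⟨k, hk, rfl⟩ := List.mem_map.1 (List.mem_of_mem_filter hj)
        have hk' := List.mem_range.1 hk
        have hjlt : a.length < (a ++ [some u]).length + k := by
          simp only [List.length_append, List.length_cons, List.length_nil]; omega
        have hjle : (a ++ [some u]).length + k ≤ (a ++ [some u] ++ r).length := by
          simp only [List.length_append]; omega
        have hsp : SPrefix a ((a ++ [some u] ++ r).take ((a ++ [some u]).length + k)) := by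
          refine sprefix_take ?_ hjlt hjle
          exact (List.prefix_append a [some u]).trans (List.prefix_append _ _)
        refine (opow_lt_opow_iff_right one_lt_omega0).2 ?_
        exact hdec _ hax _ (hT₂ _ _ (List.take_prefix _ _) hfy) hsp
      refine lt_of_lt_of_le hlt ?_
      obtain ⟨r', hr'⟩ := ha1
      rw [← hr', osum_append h (a ++ [none]) r', osum_concat_none]
      calc osum h a + omega0 ^ h a ≤ osum h a + omega0 ^ h a + _ :=
            le_self_add
        _ ≤ _ := le_self_add
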